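/- arXiv:1903.03600 — 3 statements merged into one kernel-verified Lean document; each statement's English description precedes it below -/
import Mathlib

section
/- The function U_U(φ) = φ·κ·W·log₂(1 + (1-φ)·h·Γ/(φ·(g·p + N₀))) - C_φ·φ is strictly concave in φ on (0,1), for any fixed jamming power p ≥ 0. -/
open Real Set

lemma aux_strictConcave (a c C : ℝ) (ha : 0 < a) (hc : 0 < c) :
    StrictConcaveOn ℝ (Set.Ioo (0:ℝ) 1)
      (fun x => c * (x * Real.log (a + (1 - a) * x) - x * Real.log x) - C * x) := by
  set F : ℝ → ℝ := fun x => c * (x * Real.log (a + (1 - a) * x) - x * Real.log x) - C * x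
    with hF
  set F' : ℝ → ℝ := fun x =>
      c * (Real.log (a + (1 - a) * x) + (x * (1 - a)) / (a + (1 - a) * x)
        - Real.log x - 1) - C with hF'
  have hupos : ∀ x ∈ Set.Ioo (0:ℝ) 1, 0 < a + (1 - a) * x := by
    intro x hx
    nlinarith [hx.1, hx.2, ha]
  have key : ∀ x ∈ Set.Ioo (0:ℝ) 1, HasDerivAt F (F' x) x := by
    intro x hx
    have hx0 : 0 < x := hx.1
    have hu0 : 0 < a + (1 - a) * x := hupos x hx
    have hu : HasDerivAt (fun y : ℝ => a + (1 - a) * y) (1 - a) x := by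
      simpa using ((hasDerivAt_id x).const_mul (1 - a)).const_add a
    have hlogu : HasDerivAt (fun y : ℝ => Real.log (a + (1 - a) * y))
        ((1 - a) / (a + (1 - a) * x)) x := hu.log hu0.ne'
    have h1 : HasDerivAt (fun y : ℝ => y * Real.log (a + (1 - a) * y))
        (1 * Real.log (a + (1 - a) * x) + x * ((1 - a) / (a + (1 - a) * x))) x :=
      (hasDerivAt_id x).mul hlogu
    have h2 : HasDerivAt (fun y : ℝ => y * Real.log y)
        (1 * Real.log x + x * x⁻¹) x :=
      (hasDerivAt_id x).mul (Real.hasDerivAt_log hx0.ne')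
    have h3 := ((h1.sub h2).const_mul c).sub ((hasDerivAt_id x).const_mul C)
    simp only [id_eq] at h3
    refine h3.congr_deriv ?_
    have hxx : x * x⁻¹ = 1 := by field_simp
    simp only [F']
    rw [hxx]
    ring
  have key2 : ∀ x ∈ Set.Ioo (0:ℝ) 1,
      HasDerivAt F' (-(c * a ^ 2 / (x * (a + (1 - a) * x) ^ 2))) x := by
    intro x hx
    have hx0 : 0 < x := hx.1
    have hu0 : 0 < a + (1 - a) * x := hupos x hx
    have hu : HasDerivAt (fun y : ℝ => a + (1 - a) * y) (1 - a) x := by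
      simpa using ((hasDerivAt_id x).const_mul (1 - a)).const_add a
    have hlogu : HasDerivAt (fun y : ℝ => Real.log (a + (1 - a) * y))
        ((1 - a) / (a + (1 - a) * x)) x := hu.log hu0.ne'
    have hnum : HasDerivAt (fun y : ℝ => y * (1 - a)) (1 * (1 - a)) x :=
      (hasDerivAt_id x).mul_const (1 - a)
    have hq : HasDerivAt (fun y : ℝ => y * (1 - a) / (a + (1 - a) * y))
        ((1 * (1 - a) * (a + (1 - a) * x) - x * (1 - a) * (1 - a))
          / (a + (1 - a) * x) ^ 2) x :=
      hnum.div hu hu0.ne'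
    have hlogx : HasDerivAt (fun y : ℝ => Real.log y) x⁻¹ x :=
      Real.hasDerivAt_log hx0.ne'
    have h3 : HasDerivAt F'
        (c * ((1 - a) / (a + (1 - a) * x)
          + (1 * (1 - a) * (a + (1 - a) * x) - x * (1 - a) * (1 - a))
            / (a + (1 - a) * x) ^ 2 - x⁻¹ - 0)) x := by
      exact ((((hlogu.add hq).sub hlogx).sub (hasDerivAt_const x 1)).const_mul c).sub_const C
    refine h3.congr_deriv ?_
    field_simp [hx0.ne', hu0.ne']
    ring
  refine strictConcaveOn_of_deriv2_neg (convex_Ioo (0:ℝ) 1)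
    (fun x hx => (key x hx).continuousAt.continuousWithinAt) ?_
  intro x hx
  · 
    rw [interior_Ioo] at hx
    have h1 : deriv F =ᶠ[nhds x] F' :=
      (isOpen_Ioo.eventually_mem hx).mono (fun y hy => (key y hy).deriv)
    have h2 : deriv (deriv F) x = deriv F' x := Filter.EventuallyEq.deriv_eq h1
    have h3 : deriv^[2] F x = deriv (deriv F) x := by
      simp [Function.iterate_succ, Function.iterate_one]
    rw [h3, h2, (key2 x hx).deriv]
    have hx0 : 0 < x := hx.1
    have hu0 : 0 < a + (1 - a) * x := hupos x hx
    have : 0 < c * a ^ 2 / (x * (a + (1 - a) * x) ^ 2) := by positivity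
    linarith

theorem user_utility_strictly_concave
    (κ W h Γ g N₀ Cφ p : ℝ)
    (hκ : 0 < κ) (hW : 0 < W) (hh : 0 < h) (hΓ : 0 < Γ)
    (hg : 0 < g) (hN : 0 < N₀) (hCφ : 0 ≤ Cφ) (hp : 0 ≤ p) :
    StrictConcaveOn ℝ (Set.Ioo (0:ℝ) 1)
      (fun φ => φ * κ * W * Real.logb 2 (1 + (1 - φ) * h * Γ / (φ * (g * p + N₀)))
        - Cφ * φ) := by
  have hden : 0 < g * p + N₀ := by positivity
  set a : ℝ := h * Γ / (g * p + N₀) with ha_def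
  have ha : 0 < a := by positivity
  set c : ℝ := κ * W / Real.log 2 with hc_def
  have hlog2 : 0 < Real.log 2 := Real.log_pos (by norm_num)
  have hc : 0 < c := by positivity
  have heq : ∀ φ ∈ Set.Ioo (0:ℝ) 1,
      φ * κ * W * Real.logb 2 (1 + (1 - φ) * h * Γ / (φ * (g * p + N₀))) - Cφ * φ
        = c * (φ * Real.log (a + (1 - a) * φ) - φ * Real.log φ) - Cφ * φ := by
    intro φ hφ
    have hφ0 : 0 < φ := hφ.1
    have hu0 : 0 < a + (1 - a) * φ := by nlinarith [hφ.1, hφ.2, ha]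
    have harg : 1 + (1 - φ) * h * Γ / (φ * (g * p + N₀)) = (a + (1 - a) * φ) / φ := by
      rw [ha_def]
      field_simp
      ring
    rw [harg, Real.logb, Real.log_div hu0.ne' hφ0.ne']
    rw [hc_def]
    field_simp
  have base := aux_strictConcave a c Cφ ha hc
  refine ⟨convex_Ioo _ _, fun x hx y hy hxy s t hs ht hst => ?_⟩
  have hmem : s • x + t • y ∈ Set.Ioo (0:ℝ) 1 :=
    (convex_Ioo (0:ℝ) 1) hx hy hs.le ht.le hst
  simp only [smul_eq_mul] at *
  rw [heq x hx, heq y hy, heq _ hmem]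
  exact base.2 hx hy hxy hs ht hst
end

section
/- For fixed p ≥ 0, the user's utility U_U(φ) = (κW/ln2)·φ·log(1 + c(1-φ)/φ) − C_φ·φ with c = hΓ/(gp+N₀) satisfies U_U(φ) → 0 as φ → 0⁺; moreover, if C_φ < (κW/ln2)·(log(1+c) − c/(1+c)) then U_U has a strictly positive maximum on (0,1). -/
open Real Set Filter Topology

theorem user_utility_limit_and_positive_max
    (κ W h Γ g N₀ Cφ p c : ℝ)
    (hκ : 0 < κ) (hW : 0 < W) (hh : 0 < h) (hΓ : 0 < Γ) (hg : 0 < g) (hN : 0 < N₀)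
    (hCφ : 0 ≤ Cφ) (hp : 0 ≤ p) (hc : c = h * Γ / (g * p + N₀)) :
    Filter.Tendsto
      (fun φ => κ * W / Real.log 2 * (φ * Real.log (1 + c * (1 - φ) / φ)) - Cφ * φ)
      (nhdsWithin 0 (Set.Ioi 0)) (nhds 0) ∧
    (Cφ < κ * W / Real.log 2 * (Real.log (1 + c) - c / (1 + c)) →
      ∃ φstar ∈ Set.Ioo (0:ℝ) 1,
        0 < κ * W / Real.log 2 * (φstar * Real.log (1 + c * (1 - φstar) / φstar)) - Cφ * φstar ∧
        ∀ φ ∈ Set.Ioo (0:ℝ) 1,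
          κ * W / Real.log 2 * (φ * Real.log (1 + c * (1 - φ) / φ)) - Cφ * φ
            ≤ κ * W / Real.log 2 * (φstar * Real.log (1 + c * (1 - φstar) / φstar)) - Cφ * φstar) := by
  have hc0 : 0 < c := by rw [hc]; positivity
  set A := κ * W / Real.log 2 with hA
  have hA0 : 0 < A := div_pos (by positivity) (Real.log_pos (by norm_num))
  set f : ℝ → ℝ := fun φ => A * (φ * Real.log (1 + c * (1 - φ) / φ)) - Cφ * φ with hf
  have harg : ∀ φ : ℝ, 0 < φ → φ ≤ 1 → 1 ≤ 1 + c * (1 - φ) / φ := by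
    intro φ h0 h1
    have h2 : 0 ≤ 1 - φ := by linarith
    have : 0 ≤ c * (1 - φ) / φ := by positivity
    linarith
  -- Part 1 : the limit
  have hlim : Tendsto f (𝓝[>] 0) (𝓝 0) := by
    have hbig : Tendsto (fun φ : ℝ => A * (φ * Real.log (1 + c) - φ * Real.log φ) - Cφ * φ)
        (𝓝[>] 0) (𝓝 0) := by
      have : Tendsto (fun φ : ℝ => A * (φ * Real.log (1 + c) - φ * Real.log φ) - Cφ * φ)
          (𝓝 0) (𝓝 (A * ((0:ℝ) * Real.log (1 + c) - (0:ℝ) * Real.log 0) - Cφ * 0)) := by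
        exact (((tendsto_id.mul_const _).sub Real.continuous_mul_log.continuousAt).const_mul A).sub
          (tendsto_id.const_mul Cφ)
      simpa using this.mono_left nhdsWithin_le_nhds
    have hsmall : Tendsto (fun φ : ℝ => -(Cφ * φ)) (𝓝[>] 0) (𝓝 0) := by
      have : Tendsto (fun φ : ℝ => -(Cφ * φ)) (𝓝 0) (𝓝 (-(Cφ * 0))) :=
        (tendsto_id.const_mul Cφ).neg
      simpa using this.mono_left nhdsWithin_le_nhds
    refine tendsto_of_tendsto_of_tendsto_of_le_of_le' hsmall hbig ?_ ?_
    · filter_upwards [Ioo_mem_nhdsGT_of_mem (Set.left_mem_Ico.2 one_pos)] with φ hφ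
      obtain ⟨h0, h1⟩ := hφ
      have hlog : 0 ≤ Real.log (1 + c * (1 - φ) / φ) :=
        Real.log_nonneg (harg φ h0 h1.le)
      have : 0 ≤ A * (φ * Real.log (1 + c * (1 - φ) / φ)) := by positivity
      simp only [hf]; linarith
    · filter_upwards [Ioo_mem_nhdsGT_of_mem (Set.left_mem_Ico.2 one_pos)] with φ hφ
      obtain ⟨h0, h1⟩ := hφ
      have hle : 1 + c * (1 - φ) / φ ≤ (1 + c) / φ := by
        rw [show (1:ℝ) + c * (1 - φ) / φ = (φ + c * (1 - φ)) / φ by field_simp]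
        exact (div_le_div_iff_of_pos_right h0).2 (by nlinarith)
      have hlog : Real.log (1 + c * (1 - φ) / φ) ≤ Real.log (1 + c) - Real.log φ := by
        calc Real.log (1 + c * (1 - φ) / φ) ≤ Real.log ((1 + c) / φ) :=
              Real.log_le_log (lt_of_lt_of_le one_pos (harg φ h0 h1.le)) hle
          _ = Real.log (1 + c) - Real.log φ := Real.log_div (by positivity) (ne_of_gt h0)
      have := mul_le_mul_of_nonneg_left hlog h0.le
      have := mul_le_mul_of_nonneg_left this hA0.le
      simp only [hf]
      nlinarith [this]
  refine ⟨hlim, fun _ => ?_⟩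
  -- Part 2 : positive max
  -- a point where f is positive
  obtain ⟨φ₀, hφ₀mem, hφ₀pos⟩ : ∃ φ₀ ∈ Set.Ioo (0:ℝ) 1, 0 < f φ₀ := by
    set E := Real.exp (Cφ / A) with hE
    have hE1 : 1 ≤ E := Real.one_le_exp (by positivity)
    set φ₀ : ℝ := min (1/2) (c / (4 * E)) with hφ₀
    have hφ₀0 : 0 < φ₀ := lt_min (by norm_num) (by positivity)
    have hφ₀half : φ₀ ≤ 1/2 := min_le_left _ _
    have hφ₀1 : φ₀ < 1 := lt_of_le_of_lt hφ₀half (by norm_num)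
    refine ⟨φ₀, ⟨hφ₀0, hφ₀1⟩, ?_⟩
    have hkey : E < 1 + c * (1 - φ₀) / φ₀ := by
      have h1 : c / (2 * φ₀) ≤ c * (1 - φ₀) / φ₀ := by
        rw [div_le_div_iff₀ (by positivity) hφ₀0]
        nlinarith [mul_nonneg (mul_pos hc0 hφ₀0).le (by linarith : (0:ℝ) ≤ 1 - 2*φ₀)]
      have h2 : E ≤ c / (4 * φ₀) := by
        have : φ₀ ≤ c / (4 * E) := min_le_right _ _
        rw [le_div_iff₀ (by positivity)]
        calc E * (4 * φ₀) ≤ E * (4 * (c / (4 * E))) := by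
              apply mul_le_mul_of_nonneg_left (by linarith) (by positivity)
          _ = c := by field_simp
      have h3 : c / (4 * φ₀) < 1 + c / (2 * φ₀) := by
        have : c / (4 * φ₀) < c / (2 * φ₀) := by
          apply div_lt_div_of_pos_left hc0 (by positivity) (by linarith)
        linarith
      linarith
    have hlogE : Cφ / A < Real.log (1 + c * (1 - φ₀) / φ₀) := by
      calc Cφ / A = Real.log E := (Real.log_exp _).symm
        _ < _ := Real.log_lt_log (Real.exp_pos _) hkey
    have hC : Cφ < A * Real.log (1 + c * (1 - φ₀) / φ₀) := by
      rwa [div_lt_iff₀ hA0, mul_comm] at hlogE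
    have hpos : 0 < φ₀ * (A * Real.log (1 + c * (1 - φ₀) / φ₀) - Cφ) :=
      mul_pos hφ₀0 (by linarith)
    simp only [hf]; nlinarith
  -- eventual smallness near 0
  have hev : ∀ᶠ φ in 𝓝[>] (0:ℝ), f φ < f φ₀ :=
    hlim.eventually (Filter.Tendsto.eventually_lt_const hφ₀pos tendsto_id)
  obtain ⟨δ, hδ, hsub⟩ := mem_nhdsGT_iff_exists_Ioo_subset.1 hev
  rw [Set.mem_Ioi] at hδ
  set ε : ℝ := min (δ/2) φ₀ with hε
  have hε0 : 0 < ε := lt_min (by linarith) hφ₀mem.1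
  have hεφ₀ : ε ≤ φ₀ := min_le_right _ _
  have hε1 : ε ≤ 1 := hεφ₀.trans hφ₀mem.2.le
  have hcont : ContinuousOn f (Set.Icc ε 1) := by
    have hne : ∀ x ∈ Set.Icc ε 1, x ≠ 0 := fun x hx => ne_of_gt (lt_of_lt_of_le hε0 hx.1)
    apply ContinuousOn.sub ?_ (continuousOn_const.mul continuousOn_id)
    apply ContinuousOn.mul continuousOn_const
    apply ContinuousOn.mul continuousOn_id
    apply ContinuousOn.log
    · exact continuousOn_const.add
        (((continuousOn_const.mul (continuousOn_const.sub continuousOn_id)).div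
          continuousOn_id hne))
    · intro x hx
      exact ne_of_gt (lt_of_lt_of_le one_pos (harg x (lt_of_lt_of_le hε0 hx.1) hx.2))
  obtain ⟨ψ, hψmem, hψmax⟩ := isCompact_Icc.exists_isMaxOn (Set.nonempty_Icc.2 hε1) hcont
  have hφ₀Icc : φ₀ ∈ Set.Icc ε 1 := ⟨hεφ₀, hφ₀mem.2.le⟩
  have hψge : f φ₀ ≤ f ψ := hψmax hφ₀Icc
  have hf1 : f 1 = -Cφ := by simp [hf]
  have hψne1 : ψ ≠ 1 := by
    intro hψ1
    rw [hψ1, hf1] at hψge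
    linarith
  have hψIoo : ψ ∈ Set.Ioo (0:ℝ) 1 :=
    ⟨lt_of_lt_of_le hε0 hψmem.1, lt_of_le_of_ne hψmem.2 hψne1⟩
  refine ⟨ψ, hψIoo, ?_, ?_⟩
  · show 0 < f ψ
    linarith
  intro φ hφ
  show f φ ≤ f ψ
  rcases lt_or_ge φ ε with hlt | hge
  · have : f φ < f φ₀ := hsub ⟨hφ.1, lt_of_lt_of_le hlt (le_trans (min_le_left _ _) (by linarith))⟩
    linarith
  · exact hψmax ⟨hge, hφ.2.le⟩
end

section
/- The map ψ(φ) = log(1 + c(1-φ)/φ) − c/(φ + c(1-φ)) is strictly decreasing on (0,1), tends to +∞ as φ → 0⁺ and to −c as φ → 1⁻; hence for every real threshold t ∈ (−c, ∞) there is a unique φ* ∈ (0,1) with ψ(φ*) = t. -/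
open Real Set Filter Topology

theorem psi_strictly_decreasing_and_bijective
    (c : ℝ) (hc : 0 < c) :
    StrictAntiOn (fun φ => Real.log (1 + c * (1 - φ) / φ) - c / (φ + c * (1 - φ)))
      (Set.Ioo (0:ℝ) 1) ∧
    Filter.Tendsto (fun φ => Real.log (1 + c * (1 - φ) / φ) - c / (φ + c * (1 - φ)))
      (nhdsWithin 0 (Set.Ioi 0)) Filter.atTop ∧
    Filter.Tendsto (fun φ => Real.log (1 + c * (1 - φ) / φ) - c / (φ + c * (1 - φ)))
      (nhdsWithin 1 (Set.Iio 1)) (nhds (-c)) ∧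
    ∀ t ∈ Set.Ioi (-c), ∃! φ, φ ∈ Set.Ioo (0:ℝ) 1 ∧
      Real.log (1 + c * (1 - φ) / φ) - c / (φ + c * (1 - φ)) = t := by
  set f : ℝ → ℝ := fun φ => Real.log (1 + c * (1 - φ) / φ) - c / (φ + c * (1 - φ)) with hf
  set u : ℝ → ℝ := fun φ => c + (1 - c) * φ with hu
  set g : ℝ → ℝ := fun φ => Real.log (u φ) - Real.log φ - c / u φ with hg
  have hupos : ∀ φ ∈ Set.Ioo (0:ℝ) 1, 0 < u φ := by
    rintro φ ⟨h0, h1⟩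
    simp only [hu]
    nlinarith
  have feq : ∀ φ ∈ Set.Ioo (0:ℝ) 1, f φ = g φ := by
    rintro φ hφm
    obtain ⟨h0, h1⟩ := hφm
    have hφ : φ ≠ 0 := ne_of_gt h0
    have huφ : u φ ≠ 0 := ne_of_gt (hupos φ ⟨h0, h1⟩)
    have h1' : (1 : ℝ) + c * (1 - φ) / φ = u φ / φ := by
      field_simp [hu]; ring
    have h2' : φ + c * (1 - φ) = u φ := by simp only [hu]; ring
    simp only [hf, hg, h1', h2', Real.log_div huφ hφ]
  -- derivative of g
  have hder : ∀ φ ∈ Set.Ioo (0:ℝ) 1,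
      HasDerivAt g (-(c ^ 2) / (φ * (u φ) ^ 2)) φ := by
    rintro φ hφm
    obtain ⟨h0, h1⟩ := hφm
    have hφ : φ ≠ 0 := ne_of_gt h0
    have huφpos := hupos φ ⟨h0, h1⟩
    have huφ : u φ ≠ 0 := ne_of_gt huφpos
    have hu' : HasDerivAt u (1 - c) φ := by
      simpa [hu] using ((hasDerivAt_id φ).const_mul (1 - c)).const_add c
    have h1d : HasDerivAt (fun x => Real.log (u x)) ((1 - c) / u φ) φ := hu'.log huφ
    have h2d : HasDerivAt Real.log (1 / φ) φ := by
      simpa [one_div] using Real.hasDerivAt_log hφ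
    have h3d : HasDerivAt (fun x => c / u x) (c * (-(1 - c) / (u φ) ^ 2)) φ := by
      simpa [div_eq_mul_inv] using (hu'.inv huφ).const_mul c
    have := (h1d.sub h2d).sub h3d
    convert this using 1
    · rfl
    · rfl
    · rfl
    field_simp [hu]
    ring
  have hanti : StrictAntiOn g (Set.Ioo (0:ℝ) 1) := by
    apply strictAntiOn_of_deriv_neg (convex_Ioo 0 1)
      (fun x hx => (hder x hx).continuousAt.continuousWithinAt)
    intro x hx
    rw [interior_Ioo] at hx
    rw [(hder x hx).deriv]
    apply div_neg_of_neg_of_pos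
    · nlinarith
    · have hx1 := hx.1
      have := hupos x hx
      positivity
  have hantif : StrictAntiOn f (Set.Ioo (0:ℝ) 1) := by
    intro a ha b hb hab
    rw [feq a ha, feq b hb]
    exact hanti ha hb hab
  have hmem0 : Set.Ioo (0:ℝ) 1 ∈ 𝓝[>] (0:ℝ) :=
    Ioo_mem_nhdsGT_of_mem ⟨le_refl 0, one_pos⟩
  have hmem1 : Set.Ioo (0:ℝ) 1 ∈ 𝓝[<] (1:ℝ) :=
    Ioo_mem_nhdsLT_of_mem ⟨one_pos, le_refl 1⟩
  -- limit at 0⁺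
  have hucont : Continuous u := by
    simp only [hu]; continuity
  have hlim0 : Filter.Tendsto f (𝓝[>] (0:ℝ)) Filter.atTop := by
    have hu0 : Filter.Tendsto u (𝓝[>] (0:ℝ)) (𝓝 c) := by
      have : Filter.Tendsto u (𝓝 (0:ℝ)) (𝓝 (u 0)) := hucont.continuousAt
      simp only [hu] at this ⊢
      simpa using this.mono_left nhdsWithin_le_nhds
    have hA : Filter.Tendsto (fun x => Real.log (u x) - c / u x) (𝓝[>] (0:ℝ))
        (𝓝 (Real.log c - c / c)) :=
      (hu0.log hc.ne').sub (tendsto_const_nhds.div hu0 hc.ne')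
    have hB : Filter.Tendsto (fun x => -Real.log x) (𝓝[>] (0:ℝ)) Filter.atTop := by
      exact Filter.tendsto_neg_atBot_atTop.comp Real.tendsto_log_nhdsGT_zero
    have hgC : Filter.Tendsto g (𝓝[>] (0:ℝ)) Filter.atTop := by
      have := hA.add_atTop hB
      apply this.congr
      intro x
      simp only [hg]; ring
    exact hgC.congr' (by filter_upwards [hmem0] with x hx using (feq x hx).symm)
  -- limit at 1⁻
  have hlim1 : Filter.Tendsto f (𝓝[<] (1:ℝ)) (𝓝 (-c)) := by
    have hu1 : u 1 = 1 := by simp [hu]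
    have hcgAt : ContinuousAt g 1 := by
      have h1 : ContinuousAt (fun x => Real.log (u x)) 1 :=
        (Real.continuousAt_log (by rw [hu1]; norm_num)).comp hucont.continuousAt
      have h2 : ContinuousAt Real.log 1 := Real.continuousAt_log one_ne_zero
      have h3 : ContinuousAt (fun x => c / u x) 1 :=
        continuousAt_const.div hucont.continuousAt (by rw [hu1]; norm_num)
      exact (h1.sub h2).sub h3
    have hg1 : g 1 = -c := by simp [hg, hu1]
    have : Filter.Tendsto g (𝓝[<] (1:ℝ)) (𝓝 (-c)) := by
      rw [← hg1]
      exact hcgAt.continuousWithinAt.tendsto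
    exact this.congr' (by filter_upwards [hmem1] with x hx using (feq x hx).symm)
  refine ⟨hantif, hlim0, hlim1, ?_⟩
  intro t ht
  rw [Set.mem_Ioi] at ht
  have h1 : ∀ᶠ x in 𝓝[>] (0:ℝ), t < f x := hlim0.eventually_gt_atTop t
  have h2 : ∀ᶠ x in 𝓝[<] (1:ℝ), f x < t := hlim1.eventually_lt_const ht
  obtain ⟨a, hta, haI⟩ := (h1.and (Filter.eventually_of_mem hmem0 fun x hx => hx)).exists
  obtain ⟨b, hbt, hbI⟩ := (h2.and (Filter.eventually_of_mem hmem1 fun x hx => hx)).exists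
  have hab : a < b := by
    rcases lt_trichotomy a b with h | h | h
    · exact h
    · exfalso; rw [h] at hta; linarith
    · exfalso; have := hantif hbI haI h; linarith
  have hcontf : ContinuousOn f (Set.Icc a b) := by
    have hsub : Set.Icc a b ⊆ Set.Ioo (0:ℝ) 1 := fun x hx =>
      ⟨lt_of_lt_of_le haI.1 hx.1, lt_of_le_of_lt hx.2 hbI.2⟩
    have hcg : ContinuousOn g (Set.Ioo (0:ℝ) 1) := fun x hx =>
      (hder x hx).continuousAt.continuousWithinAt
    exact (hcg.congr fun x hx => feq x hx).mono hsub
  obtain ⟨φ, hφIcc, hφt⟩ := intermediate_value_Icc' hab.le hcontf ⟨hbt.le, hta.le⟩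
  have hφI : φ ∈ Set.Ioo (0:ℝ) 1 :=
    ⟨lt_of_lt_of_le haI.1 hφIcc.1, lt_of_le_of_lt hφIcc.2 hbI.2⟩
  refine ⟨φ, ⟨hφI, hφt⟩, ?_⟩
  rintro ψ ⟨hψI, hψt⟩
  exact hantif.injOn hψI hφI (by show f ψ = f φ; rw [hφt]; exact hψt)
end
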